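/- Let Ψ satisfy Ψ'(x) = exp(−3 Ψ(x)²) with Ψ(0) = 0, fix σ ∈ (0, 1/100], define q_i = Ψ'(iσ) and π_i = σ + Σ_{j=0}^{i−1} σ q_j. Then for every i ≥ 0, |(q_i − q_{i+1}) − 6σ q_i² π_i| ≤ 16 σ² q_i². -/

import Mathlib

open intervalIntegral in
lemma num_aux (α σ q : ℝ) (hα : 0 ≤ α) (hσ : 0 < σ) (hσ' : σ ≤ 1/100)
    (hq : q = Real.exp (-3*α^2)) :
    12*σ^2*q^2 - 6*σ^2*q^3 + 18*σ^2*q^3*(α+σ)*(2*α+σ) ≤ 16*σ^2*q^2 := by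
  have hq0 : 0 < q := hq ▸ Real.exp_pos _
  have hq1 : q ≤ 1 := by
    rw [hq, Real.exp_le_one_iff]; nlinarith [sq_nonneg α]
  have hkey : q * (1 + 3*α^2/4)^4 ≤ 1 := by
    have h1 : (1 + 3*α^2/4)^4 ≤ Real.exp (3*α^2) := by
      have h2 : 1 + 3*α^2/4 ≤ Real.exp (3*α^2/4) := by
        linarith [Real.add_one_le_exp (3*α^2/4)]
      calc (1 + 3*α^2/4)^4 ≤ (Real.exp (3*α^2/4))^4 := by
            apply pow_le_pow_left₀ (by positivity) h2
        _ = Real.exp (3*α^2) := by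
            rw [← Real.exp_nat_mul]; ring_nf
    calc q * (1 + 3*α^2/4)^4 ≤ q * Real.exp (3*α^2) := by
          apply mul_le_mul_of_nonneg_left h1 hq0.le
      _ = 1 := by rw [hq, ← Real.exp_add]; norm_num
  have hE4 : 18*(α+σ)*(2*α+σ) - 6 ≤ 4*(1+3*α^2/4)^4 := by
    nlinarith [sq_nonneg (α^2 - 1), sq_nonneg (α - 1), sq_nonneg α, sq_nonneg (α^2),
      mul_nonneg hα hα, sq_nonneg (α^2 - 2/3), mul_nonneg (mul_nonneg hα hα) hα,
      sq_nonneg (α*(α^2-1)), sq_nonneg (α^4 - 1), mul_nonneg hα hσ.le, sq_nonneg (α - σ)]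
  have hmain : q * (18*(α+σ)*(2*α+σ) - 6) ≤ 4 := by
    rcases le_or_gt (18*(α+σ)*(2*α+σ) - 6) 0 with h | h
    · nlinarith
    · have hP : (0:ℝ) < (1 + 3*α^2/4)^4 := by positivity
      nlinarith [mul_le_mul_of_nonneg_left hE4 hq0.le, mul_pos hq0 h]
  nlinarith [sq_nonneg σ, mul_pos hσ hσ, mul_pos (mul_pos hσ hσ) (mul_pos hq0 hq0),
    mul_le_mul_of_nonneg_left hmain (le_of_lt (mul_pos (mul_pos hσ hσ) (mul_pos hq0 hq0)))]

set_option maxHeartbeats 2000000 in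
theorem stmt_7 (Ψ : ℝ → ℝ) (σ : ℝ) (hσ : 0 < σ) (hσ' : σ ≤ 1 / 100)
    (hΨ : ∀ x : ℝ, 0 ≤ x → HasDerivAt Ψ (Real.exp (-3 * Ψ x ^ 2)) x)
    (hΨ0 : Ψ 0 = 0)
    (q : ℕ → ℝ) (hq : ∀ j : ℕ, q j = deriv Ψ (j * σ))
    (Pi : ℕ → ℝ) (hPi : ∀ i : ℕ, Pi i = σ + ∑ j ∈ Finset.range i, σ * q j) :
    ∀ i : ℕ, |(q i - q (i + 1)) - 6 * σ * q i ^ 2 * Pi i| ≤ 16 * σ ^ 2 * q i ^ 2 := by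
  set f : ℝ → ℝ := fun x => Real.exp (-3 * Ψ x ^ 2) with hfdef
  have hf_pos : ∀ x, 0 < f x := fun x => Real.exp_pos _
  have hf_le1 : ∀ x, f x ≤ 1 := by
    intro x; rw [hfdef]
    simp only
    rw [Real.exp_le_one_iff]; nlinarith [sq_nonneg (Ψ x)]
  -- derivative of f
  have hfd : ∀ x : ℝ, 0 ≤ x → HasDerivAt f (-6 * Ψ x * f x ^ 2) x := by
    intro x hx
    have h1 := hΨ x hx
    have h2 : HasDerivAt (fun y => -3 * Ψ y ^ 2)
        (-3 * (2 * Ψ x ^ 1 * Real.exp (-3 * Ψ x ^ 2))) x := (h1.pow 2).const_mul (-3)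
    have h3 := h2.exp
    convert h3 using 1
    simp only [hfdef]; ring
  -- continuity of Ψ on nonneg reals
  have hΨcont : ∀ s : Set ℝ, s ⊆ Set.Ici 0 → ContinuousOn Ψ s := by
    intro s hs x hx
    exact ((hΨ x (hs hx)).continuousAt).continuousWithinAt
  have hfcont : ∀ s : Set ℝ, s ⊆ Set.Ici 0 → ContinuousOn f s := by
    intro s hs
    exact Real.continuous_exp.comp_continuousOn
      ((continuousOn_const.mul ((hΨcont s hs).pow 2)))
  have hderivΨ : ∀ x : ℝ, 0 ≤ x → deriv Ψ x = f x := fun x hx => (hΨ x hx).deriv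
  -- Ψ monotone and nonneg on [0,∞)
  have hmono : ∀ a b : ℝ, 0 ≤ a → a ≤ b → Ψ a ≤ Ψ b := by
    intro a b ha hab
    have h := (convex_Icc a b).mul_sub_le_image_sub_of_le_deriv
      (hΨcont _ (Set.Icc_subset_Ici_iff hab |>.2 ha)) (f := Ψ) (C := 0)
      (fun x hx => ((hΨ x (le_trans ha (Set.mem_Icc.1 (interior_subset hx)).1)).differentiableAt).differentiableWithinAt)
      (fun x hx => by
        rw [hderivΨ x (le_trans ha (Set.mem_Icc.1 (interior_subset hx)).1)]
        exact (hf_pos x).le)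
      a (Set.left_mem_Icc.2 hab) b (Set.right_mem_Icc.2 hab) hab
    linarith
  have hΨnn : ∀ x : ℝ, 0 ≤ x → 0 ≤ Ψ x := by
    intro x hx
    have := hmono 0 x le_rfl hx
    linarith [hΨ0 ▸ this]
  -- f antitone
  have hanti : ∀ a b : ℝ, 0 ≤ a → a ≤ b → f b ≤ f a := by
    intro a b ha hab
    rw [hfdef]; simp only
    apply Real.exp_le_exp.2
    nlinarith [hmono a b ha hab, hΨnn a ha]
  -- mean value bounds for increments of Ψ
  have hincr_ub : ∀ a b : ℝ, 0 ≤ a → a ≤ b → Ψ b - Ψ a ≤ f a * (b - a) := by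
    intro a b ha hab
    exact (convex_Icc a b).image_sub_le_mul_sub_of_deriv_le
      (hΨcont _ (Set.Icc_subset_Ici_iff hab |>.2 ha))
      (fun x hx => ((hΨ x (le_trans ha (Set.mem_Icc.1 (interior_subset hx)).1)).differentiableAt).differentiableWithinAt)
      (fun x hx => by
        have hx' := Set.mem_Icc.1 (interior_subset hx)
        rw [hderivΨ x (le_trans ha hx'.1)]
        exact hanti a x ha hx'.1)
      a (Set.left_mem_Icc.2 hab) b (Set.right_mem_Icc.2 hab) hab
  have hincr_lb : ∀ a b : ℝ, 0 ≤ a → a ≤ b → f b * (b - a) ≤ Ψ b - Ψ a := by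
    intro a b ha hab
    exact (convex_Icc a b).mul_sub_le_image_sub_of_le_deriv
      (hΨcont _ (Set.Icc_subset_Ici_iff hab |>.2 ha))
      (fun x hx => ((hΨ x (le_trans ha (Set.mem_Icc.1 (interior_subset hx)).1)).differentiableAt).differentiableWithinAt)
      (fun x hx => by
        have hx' := Set.mem_Icc.1 (interior_subset hx)
        rw [hderivΨ x (le_trans ha hx'.1)]
        exact hanti x b (le_trans ha hx'.1) hx'.2)
      a (Set.left_mem_Icc.2 hab) b (Set.right_mem_Icc.2 hab) hab
  -- q in terms of f
  have hqf : ∀ j : ℕ, q j = f ((j : ℝ) * σ) := by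
    intro j
    rw [hq j, hderivΨ _ (by positivity)]
  have hq0' : ∀ j, 0 < q j := fun j => (hqf j) ▸ hf_pos _
  have hq1' : ∀ j, q j ≤ 1 := fun j => (hqf j) ▸ hf_le1 _
  -- Pi bounds on Ψ(iσ)
  have hPiα : ∀ i : ℕ, Pi i - σ * (2 - q i) ≤ Ψ ((i:ℝ) * σ) ∧ Ψ ((i:ℝ) * σ) ≤ Pi i - σ := by
    intro i
    induction i with
    | zero =>
      have hq00 : q 0 = 1 := by
        rw [hqf 0]
        simp [hfdef, hΨ0]
      simp only [Nat.cast_zero, zero_mul, hΨ0, hPi 0, Finset.range_zero,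
        Finset.sum_empty, hq00]
      constructor <;> linarith
    | succ i ih =>
      have hia : (0:ℝ) ≤ (i:ℝ) * σ := by positivity
      have hiab : (i:ℝ) * σ ≤ ((i+1:ℕ):ℝ) * σ := by
        push_cast; nlinarith
      have h1 := hincr_ub ((i:ℝ)*σ) (((i+1:ℕ):ℝ)*σ) hia hiab
      have h2 := hincr_lb ((i:ℝ)*σ) (((i+1:ℕ):ℝ)*σ) hia hiab
      have hdiff : ((i+1:ℕ):ℝ) * σ - (i:ℝ)*σ = σ := by push_cast; ring
      rw [hdiff] at h1 h2
      have hPis : Pi (i+1) = Pi i + σ * q i := by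
        rw [hPi (i+1), hPi i, Finset.sum_range_succ]; ring
      have hfq1 : f (((i+1:ℕ):ℝ)*σ) = q (i+1) := (hqf (i+1)).symm
      have hfq0 : f ((i:ℝ)*σ) = q i := (hqf i).symm
      rw [hfq1] at h2
      rw [hfq0] at h1
      constructor
      · -- lower
        have := ih.1
        linarith
      · have := ih.2
        have := hq1' i
        linarith
  -- main estimate for each i
  intro i
  set a : ℝ := (i:ℝ) * σ with hadef
  set b : ℝ := ((i+1:ℕ):ℝ) * σ with hbdef
  have ha0 : (0:ℝ) ≤ a := by positivity
  have hab : a ≤ b := by rw [hadef, hbdef]; push_cast; nlinarith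
  have hba : b - a = σ := by rw [hadef, hbdef]; push_cast; ring
  set A : ℝ := Ψ a with hAdef
  set Q : ℝ := q i with hQdef
  set P : ℝ := Pi i with hPdef
  have hA0 : 0 ≤ A := hΨnn a ha0
  have hQf : Q = f a := hqf i
  have hQpos : 0 < Q := hq0' i
  have hQ1 : Q ≤ 1 := hq1' i
  have hAP : P - σ * (2 - Q) ≤ A ∧ A ≤ P - σ := hPiα i
  -- subsets
  have hsub : Set.Icc a b ⊆ Set.Ici (0:ℝ) := Set.Icc_subset_Ici_iff hab |>.2 ha0
  have huIcc : Set.uIcc a b = Set.Icc a b := Set.uIcc_of_le hab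
  -- integrand continuity
  have hcont : ContinuousOn (fun t => 6 * Ψ t * f t ^ 2) (Set.Icc a b) :=
    (continuousOn_const.mul (hΨcont _ hsub)).mul ((hfcont _ hsub).pow 2)
  have hint : IntervalIntegrable (fun t => 6 * Ψ t * f t ^ 2) MeasureTheory.volume a b := by
    apply ContinuousOn.intervalIntegrable
    rwa [huIcc]
  -- FTC
  have hftc : (∫ t in a..b, -(6 * Ψ t * f t ^ 2)) = f b - f a := by
    apply intervalIntegral.integral_eq_sub_of_hasDerivAt
    · intro t ht
      rw [huIcc] at ht
      have := hfd t (hsub ht)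
      rw [show -6 * Ψ t * f t ^ 2 = -(6 * Ψ t * f t ^ 2) by ring] at this
      exact this
    · exact hint.neg
  rw [intervalIntegral.integral_neg] at hftc
  have hftc' : (∫ t in a..b, 6 * Ψ t * f t ^ 2) = q i - q (i+1) := by
    rw [hqf i, hqf (i+1)]
    have : ((i:ℝ)+1) * σ = b := by rw [hbdef]; push_cast; ring
    push_cast
    rw [this]
    linarith
  -- pointwise bounds
  have hptwise_ub : ∀ t ∈ Set.Icc a b, 6 * Ψ t * f t ^ 2 ≤ 6 * P * Q ^ 2 := by
    intro t ht
    have ht0 : (0:ℝ) ≤ t := hsub ht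
    have h1 : Ψ t - A ≤ f a * (t - a) := hincr_ub a t ha0 ht.1
    have h2 : f t ≤ Q := hQf ▸ hanti a t ha0 ht.1
    have h3 : 0 < f t := hf_pos t
    have h4 : 0 ≤ Ψ t := hΨnn t ht0
    have h5 : t - a ≤ σ := by linarith [ht.2, hba]
    have h6 : A ≤ P - σ := hAP.2
    have hΨtP : Ψ t ≤ P := by nlinarith [hQf ▸ hQ1, ht.1]
    nlinarith [sq_nonneg (f t), mul_le_mul h2 h2 h3.le (le_trans h3.le h2)]
  have hptwise_lb : ∀ t ∈ Set.Icc a b,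
      6 * P * Q ^ 2 - 6 * Ψ t * f t ^ 2 ≤
        (12*σ*Q^2 - 6*σ*Q^3) + 36*Q^3*(A+σ)*(2*A+σ)*(t-a) := by
    intro t ht
    have ht0 : (0:ℝ) ≤ t := hsub ht
    have h1 : Ψ t - A ≤ f a * (t - a) := hincr_ub a t ha0 ht.1
    rw [← hQf] at h1
    have hta : 0 ≤ t - a := by linarith [ht.1]
    have h5 : t - a ≤ σ := by linarith [ht.2, hba]
    have hψA : A ≤ Ψ t := hmono a t ha0 ht.1
    have hψσ : Ψ t ≤ A + σ * Q := by nlinarith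
    have hc1 : P - Ψ t ≤ σ * (2 - Q) := by linarith [hAP.1]
    -- exponential estimate : Q^2 - f t^2 ≤ 6 Q^2 (Ψt - A)(Ψt + A)
    have hexp : Q^2 - f t ^2 ≤ 6 * Q^2 * ((Ψ t - A) * (Ψ t + A)) := by
      have hid : f t ^ 2 = Q^2 * Real.exp (-(6 * (Ψ t ^2 - A^2))) := by
        rw [hQf, hfdef]
        simp only
        rw [← Real.exp_nat_mul, ← Real.exp_nat_mul, ← Real.exp_add]
        congr 1
        push_cast; ring
      have hxnn : (0:ℝ) ≤ 6 * (Ψ t ^2 - A^2) := by nlinarith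
      have hee : 1 - 6 * (Ψ t ^2 - A^2) ≤ Real.exp (-(6 * (Ψ t ^2 - A^2))) := by
        linarith [Real.add_one_le_exp (-(6 * (Ψ t ^2 - A^2)))]
      have hQ2 : (0:ℝ) < Q^2 := by positivity
      calc Q^2 - f t ^2 = Q^2 * (1 - Real.exp (-(6 * (Ψ t ^2 - A^2)))) := by
            rw [hid]; ring
        _ ≤ Q^2 * (6 * (Ψ t ^2 - A^2)) := by nlinarith
        _ = 6 * Q^2 * ((Ψ t - A) * (Ψ t + A)) := by ring
    have hft : f t ≤ Q := hQf ▸ hanti a t ha0 ht.1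
    have hftpos : 0 < f t := hf_pos t
    have hψnn : 0 ≤ Ψ t := hΨnn t ht0
    -- combine
    have hσQ : σ * Q ≤ σ := by nlinarith
    have hψub : Ψ t ≤ A + σ := by linarith
    have hsum : Ψ t + A ≤ 2*A + σ := by linarith
    have hdiff : Ψ t - A ≤ Q * (t - a) := h1
    have key2 : 6 * Ψ t * (Q^2 - f t ^2) ≤ 36*Q^3*(A+σ)*(2*A+σ)*(t-a) := by
      have e1 : 6 * Ψ t * (Q^2 - f t ^2) ≤ 6 * Ψ t * (6 * Q^2 * ((Ψ t - A) * (Ψ t + A))) := by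
        have : 0 ≤ 6 * Ψ t := by linarith
        nlinarith [hexp]
      have e2 : 6 * Ψ t * (6 * Q^2 * ((Ψ t - A) * (Ψ t + A))) ≤
          36 * Q^2 * ((A + σ) * ((2*A+σ) * (Q * (t-a)))) := by
        have hd0 : 0 ≤ Ψ t - A := by linarith
        have hs0 : 0 ≤ Ψ t + A := by linarith
        have hq2 : (0:ℝ) ≤ Q^2 := by positivity
        have m1 : (Ψ t - A) * (Ψ t + A) ≤ (Q * (t-a)) * (2*A+σ) :=
          mul_le_mul hdiff hsum hs0 (by positivity)
        have m2 : Ψ t * ((Ψ t - A) * (Ψ t + A)) ≤ (A + σ) * ((Q * (t-a)) * (2*A+σ)) := by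
          apply mul_le_mul hψub m1 (by positivity) (by linarith)
        nlinarith [m2]
      calc 6 * Ψ t * (Q^2 - f t ^2) ≤ _ := e1
        _ ≤ _ := e2
        _ = 36*Q^3*(A+σ)*(2*A+σ)*(t-a) := by ring
    have key1 : 6 * Q^2 * (P - Ψ t) ≤ 12*σ*Q^2 - 6*σ*Q^3 := by nlinarith
    nlinarith [key1, key2]
  -- integrate the bounds
  have hconst_int : IntervalIntegrable (fun _ : ℝ => 6 * P * Q ^ 2) MeasureTheory.volume a b :=
    intervalIntegrable_const
  have hg1int : IntervalIntegrable (fun t => 6 * P * Q^2 - 6 * Ψ t * f t ^ 2)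
      MeasureTheory.volume a b := hconst_int.sub hint
  have hg2int : IntervalIntegrable
      (fun t => (12*σ*Q^2 - 6*σ*Q^3) + 36*Q^3*(A+σ)*(2*A+σ)*(t-a))
      MeasureTheory.volume a b := by
    apply Continuous.intervalIntegrable
    continuity
  have hmono_int : (∫ t in a..b, (6 * P * Q^2 - 6 * Ψ t * f t ^ 2)) ≤
      ∫ t in a..b, ((12*σ*Q^2 - 6*σ*Q^3) + 36*Q^3*(A+σ)*(2*A+σ)*(t-a)) := by
    apply intervalIntegral.integral_mono_on hab hg1int hg2int
    intro t ht
    exact hptwise_lb t ht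
  have hnn_int : 0 ≤ ∫ t in a..b, (6 * P * Q^2 - 6 * Ψ t * f t ^ 2) := by
    apply intervalIntegral.integral_nonneg hab
    intro t ht
    have := hptwise_ub t ht
    linarith
  -- compute the RHS integral
  have hrhs : (∫ t in a..b, ((12*σ*Q^2 - 6*σ*Q^3) + 36*Q^3*(A+σ)*(2*A+σ)*(t-a))) =
      (12*σ*Q^2 - 6*σ*Q^3)*σ + 36*Q^3*(A+σ)*(2*A+σ)*(σ^2/2) := by
    rw [intervalIntegral.integral_add intervalIntegrable_const
      (by apply Continuous.intervalIntegrable; continuity)]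
    rw [intervalIntegral.integral_const]
    have : (∫ t in a..b, 36*Q^3*(A+σ)*(2*A+σ)*(t-a)) =
        36*Q^3*(A+σ)*(2*A+σ) * ∫ t in a..b, (t - a) := by
      rw [← intervalIntegral.integral_const_mul]
    have hid2 : (∫ t in a..b, (t - a)) = (b-a)^2/2 := by
      open intervalIntegral in
      rw [integral_sub intervalIntegrable_id intervalIntegrable_const, integral_id,
        intervalIntegral.integral_const]
      simp [smul_eq_mul]; ring
    rw [this, hid2]
    rw [hba]
    simp only [smul_eq_mul]
    ring
  -- compute LHS integral
  have hlhs : (∫ t in a..b, (6 * P * Q^2 - 6 * Ψ t * f t ^ 2)) =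
      6 * P * Q^2 * σ - (q i - q (i+1)) := by
    rw [intervalIntegral.integral_sub hconst_int hint, hftc', intervalIntegral.integral_const,
      hba, smul_eq_mul]
    ring
  -- put it together
  have hnum := num_aux A σ Q hA0 hσ hσ' (by rw [hQf, hfdef])
  rw [hlhs] at hmono_int hnn_int
  rw [hrhs] at hmono_int
  rw [abs_le]
  constructor
  · -- lower bound
    nlinarith
  · nlinarith [sq_nonneg σ, mul_pos hσ hσ, sq_nonneg Q, mul_pos hQpos hQpos,
      mul_pos (mul_pos hσ hσ) (mul_pos hQpos hQpos)]
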